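/- Let Q ∈ ℤ[x_1,…,x_n] be an integral polynomial, λ ∈ ℤ, and j ≥ 1 an integer. Set I_j = [2^{j−1}, 2^j) ∩ ℤ and C_j(d) = ∑_{h ≥ 1} μ(h)·1_{dh ∈ I_j} (a finite sum, with C_j(d) = 0 whenever d ≥ 2^j). Then for every function Φ : ℝ^n → ℂ and every ξ ∈ ℝ^n, ∑_{q ∈ I_j} ∑_{a ∈ U_q} ∑_{𝐚 ∈ Z_q^n} F_q(a,𝐚) e(−λa/q) Φ(ξ − 𝐚/q) = ∑_{d = 1}^{∞} C_j(d) ∑_{a ∈ Z_d} ∑_{𝐚 ∈ Z_d^n} F_d(a,𝐚) e(−λa/d) Φ(ξ − 𝐚/d), where both sides are finite sums. -/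

import Mathlib

set_option maxHeartbeats 1000000

open scoped BigOperators
open ArithmeticFunction
open scoped ArithmeticFunction.zeta ArithmeticFunction.Moebius

noncomputable section

/-- `e(t) = e^{2πit}`. -/
def e2pi (t : ℝ) : ℂ := Complex.exp (2 * Real.pi * Complex.I * t)

/-- The normalized Weyl sum `F_d(a, 𝐚) = d^{-n} ∑_{s ∈ Z_d^n} e((a·Q(s) + s·𝐚)/d)`. -/
def weylF (n : ℕ) (Q : MvPolynomial (Fin n) ℤ) (d : ℕ) (a : ℤ) (av : Fin n → ℤ) : ℂ :=
  ((d : ℂ) ^ n)⁻¹ *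
    ∑ s : Fin n → Fin d,
      e2pi (((a * MvPolynomial.eval (fun i => ((s i : ℕ) : ℤ)) Q
        + ∑ i, ((s i : ℕ) : ℤ) * av i : ℤ) : ℝ) / (d : ℝ))

/-- `C_j(d) = ∑_{h ≥ 1} μ(h) 1_{dh ∈ I_j}`, a finite sum since `dh ∈ I_j = [2^{j-1}, 2^j)`
forces `h ≤ 2^j`. -/
def Cjd (j d : ℕ) : ℤ :=
  ∑ h ∈ Finset.Icc 1 (2 ^ j),
    if 2 ^ (j - 1) ≤ d * h ∧ d * h < 2 ^ j then ArithmeticFunction.moebius h else 0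

lemma e2pi_add (s t : ℝ) : e2pi (s + t) = e2pi s * e2pi t := by
  unfold e2pi; rw [← Complex.exp_add]; congr 1; push_cast; ring

lemma e2pi_intCast (k : ℤ) : e2pi k = 1 := by
  unfold e2pi
  rw [show (2 * (Real.pi:ℂ) * Complex.I * ((k:ℝ):ℂ) : ℂ) = (k:ℤ) * (2 * Real.pi * Complex.I) by push_cast; ring]
  exact Complex.exp_int_mul_two_pi_mul_I k

lemma e2pi_nat_mul (k : ℕ) (t : ℝ) : e2pi (k * t) = e2pi t ^ k := by
  unfold e2pi
  rw [← Complex.exp_nat_mul]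
  congr 1; push_cast; ring

lemma e2pi_sum {ι : Type*} (s : Finset ι) (f : ι → ℝ) :
    e2pi (∑ i ∈ s, f i) = ∏ i ∈ s, e2pi (f i) := by
  unfold e2pi
  rw [← Complex.exp_sum]
  congr 1
  rw [← Finset.mul_sum]
  push_cast
  ring

lemma e2pi_add_int (t : ℝ) (k : ℤ) : e2pi (t + k) = e2pi t := by
  rw [e2pi_add, e2pi_intCast, mul_one]

lemma e2pi_int_div_congr (q : ℕ) (hq : 0 < q) {x y : ℤ} (h : x ≡ y [ZMOD q]) :
    e2pi ((x : ℝ) / q) = e2pi ((y : ℝ) / q) := by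
  obtain ⟨k, hk⟩ := h.dvd
  have hx : (x : ℝ) / q = (y : ℝ) / q + (-k : ℤ) := by
    have hq' : (q : ℝ) ≠ 0 := Nat.cast_ne_zero.mpr hq.ne'
    have : (y : ℝ) - x = q * k := by exact_mod_cast congrArg (Int.cast : ℤ → ℝ) hk
    field_simp
    push_cast
    linarith
  rw [hx, e2pi_add_int]

lemma sum_e2pi_fin (m : ℕ) (hm : 0 < m) (c : ℤ) :
    ∑ x : Fin m, e2pi ((((x : ℕ) * c : ℤ) : ℝ) / m) = if (m : ℤ) ∣ c then (m : ℂ) else 0 := by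
  have hm' : (m : ℝ) ≠ 0 := Nat.cast_ne_zero.mpr hm.ne'
  have hterm : ∀ x : Fin m, e2pi ((((x : ℕ) * c : ℤ) : ℝ) / m) = e2pi ((c : ℝ) / m) ^ (x : ℕ) := by
    intro x
    rw [← e2pi_nat_mul]
    congr 1
    push_cast
    ring
  simp_rw [hterm]
  rw [Fin.sum_univ_eq_sum_range]
  by_cases h : (m : ℤ) ∣ c
  · obtain ⟨k, rfl⟩ := h
    have : ((m * k : ℤ) : ℝ) / m = ((k : ℤ) : ℝ) := by push_cast; field_simp
    rw [this, e2pi_intCast]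
    simp [if_pos (Dvd.intro k rfl)]
  · rw [if_neg h]
    have hr1 : e2pi ((c : ℝ) / m) ≠ 1 := by
      intro hr
      apply h
      unfold e2pi at hr
      rw [Complex.exp_eq_one_iff] at hr
      obtain ⟨k, hk⟩ := hr
      have h2 : (2 * (Real.pi : ℂ) * Complex.I) ≠ 0 := by
        simp [Real.pi_ne_zero, Complex.I_ne_zero]
      have h3 : (((c : ℝ) / m : ℝ) : ℂ) * (2 * (Real.pi : ℂ) * Complex.I) = (k : ℂ) * (2 * (Real.pi : ℂ) * Complex.I) := by
        rw [← hk]; ring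
      have h4 : (((c : ℝ) / m : ℝ) : ℂ) = ((k : ℝ) : ℂ) := by
        have := mul_right_cancel₀ h2 h3
        rw [this]; norm_num
      have h5 : (c : ℝ) / m = (k : ℝ) := Complex.ofReal_inj.mp h4
      have h6 : (c : ℝ) = (k : ℝ) * m := by field_simp at h5; linarith
      have h7 : (c : ℝ) = ((m * k : ℤ) : ℝ) := by push_cast; linarith
      exact ⟨k, by exact_mod_cast h7⟩
    rw [geom_sum_eq hr1]
    have : e2pi ((c : ℝ) / m) ^ m = 1 := by
      rw [← e2pi_nat_mul]
      have : (m : ℝ) * ((c:ℝ)/m) = ((c : ℤ) : ℝ) := by field_simp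
      rw [this, e2pi_intCast]
    rw [this, sub_self, zero_div]

lemma eval_modEq (n : ℕ) (Q : MvPolynomial (Fin n) ℤ) (q : ℤ) (x y : Fin n → ℤ)
    (h : ∀ i, x i ≡ y i [ZMOD q]) :
    MvPolynomial.eval x Q ≡ MvPolynomial.eval y Q [ZMOD q] := by
  induction Q using MvPolynomial.induction_on with
  | C a => simp
  | add p r hp hr => simpa [map_add] using hp.add hr
  | mul_X p i hp => simpa [MvPolynomial.eval_mul] using hp.mul (h i)

lemma weyl_key (n : ℕ) (Q : MvPolynomial (Fin n) ℤ) (m q : ℕ) (hm : 0 < m) (hq : 0 < q)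
    (a' : ℤ) (c : Fin n → ℤ) :
    weylF n Q (m * q) (a' * m) c =
      if ∀ i, (m : ℤ) ∣ c i then weylF n Q q a' (fun i => c i / m) else 0 := by
  have hmr : (m : ℝ) ≠ 0 := Nat.cast_ne_zero.mpr hm.ne'
  have hqr : (q : ℝ) ≠ 0 := Nat.cast_ne_zero.mpr hq.ne'
  -- the equivalence
  set E : ((Fin n → Fin m) × (Fin n → Fin q)) ≃ (Fin n → Fin (m * q)) :=
    (Equiv.arrowProdEquivProdArrow (Fin n) (fun _ => Fin m) (fun _ => Fin q)).symm.trans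
      (Equiv.arrowCongr (Equiv.refl (Fin n)) finProdFinEquiv) with hE
  have hEval : ∀ (p : (Fin n → Fin m) × (Fin n → Fin q)) (i : Fin n),
      ((E p i : ℕ)) = (p.2 i : ℕ) + q * (p.1 i : ℕ) := by
    intro p i
    simp [hE, Equiv.arrowProdEquivProdArrow, Equiv.arrowCongr]
  -- rewrite the big sum
  rw [weylF, ← Equiv.sum_comp E, Fintype.sum_prod_type]
  -- per-term rewriting
  have hterm : ∀ (u : Fin n → Fin m) (t : Fin n → Fin q),
      e2pi ((((a' * m) * MvPolynomial.eval (fun i => ((E (u, t) i : ℕ) : ℤ)) Q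
        + ∑ i, ((E (u, t) i : ℕ) : ℤ) * c i : ℤ) : ℝ) / ((m * q : ℕ) : ℝ)) =
      (e2pi (((a' * MvPolynomial.eval (fun i => ((t i : ℕ) : ℤ)) Q : ℤ) : ℝ) / q)
        * e2pi (((∑ i, ((t i : ℕ) : ℤ) * c i : ℤ) : ℝ) / ((m * q : ℕ) : ℝ)))
        * e2pi (((∑ i, ((u i : ℕ) : ℤ) * c i : ℤ) : ℝ) / m) := by
    intro u t
    have hsI : ∀ i, ((E (u, t) i : ℕ) : ℤ) = ((t i : ℕ) : ℤ) + q * ((u i : ℕ) : ℤ) := by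
      intro i; rw [hEval (u, t) i]; push_cast; ring
    have hsum : (∑ i, ((E (u, t) i : ℕ) : ℤ) * c i)
        = (∑ i, ((t i : ℕ) : ℤ) * c i) + q * ∑ i, ((u i : ℕ) : ℤ) * c i := by
      rw [Finset.mul_sum, ← Finset.sum_add_distrib]
      refine Finset.sum_congr rfl fun i _ => ?_
      rw [hsI i]; ring
    have hsplit : (((a' * m) * MvPolynomial.eval (fun i => ((E (u, t) i : ℕ) : ℤ)) Q
        + ∑ i, ((E (u, t) i : ℕ) : ℤ) * c i : ℤ) : ℝ) / ((m * q : ℕ) : ℝ)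
      = ((a' * MvPolynomial.eval (fun i => ((E (u, t) i : ℕ) : ℤ)) Q : ℤ) : ℝ) / q
        + ((∑ i, ((t i : ℕ) : ℤ) * c i : ℤ) : ℝ) / ((m * q : ℕ) : ℝ)
        + ((∑ i, ((u i : ℕ) : ℤ) * c i : ℤ) : ℝ) / m := by
      rw [hsum]
      push_cast
      field_simp
      ring
    rw [hsplit, e2pi_add, e2pi_add]
    congr 2
    refine e2pi_int_div_congr q hq ?_
    refine Int.ModEq.mul_left a' (eval_modEq n Q q _ _ fun i => ?_)
    rw [hsI i]
    have h0 : (q : ℤ) * ((u i : ℕ) : ℤ) ≡ 0 [ZMOD (q : ℤ)] :=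
      Int.modEq_zero_iff_dvd.mpr ⟨_, rfl⟩
    simpa using (Int.ModEq.add_left (((t i : ℕ) : ℤ)) h0)
  simp_rw [hterm]
  have hfac : (∑ u : Fin n → Fin m, ∑ t : Fin n → Fin q,
      (e2pi (((a' * MvPolynomial.eval (fun i => ((t i : ℕ) : ℤ)) Q : ℤ) : ℝ) / q)
        * e2pi (((∑ i, ((t i : ℕ) : ℤ) * c i : ℤ) : ℝ) / ((m * q : ℕ) : ℝ)))
        * e2pi (((∑ i, ((u i : ℕ) : ℤ) * c i : ℤ) : ℝ) / m))
      = (∑ u : Fin n → Fin m, e2pi (((∑ i, ((u i : ℕ) : ℤ) * c i : ℤ) : ℝ) / m))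
        * (∑ t : Fin n → Fin q,
            e2pi (((a' * MvPolynomial.eval (fun i => ((t i : ℕ) : ℤ)) Q : ℤ) : ℝ) / q)
              * e2pi (((∑ i, ((t i : ℕ) : ℤ) * c i : ℤ) : ℝ) / ((m * q : ℕ) : ℝ))) := by
    rw [Finset.sum_mul_sum]
    exact Finset.sum_congr rfl fun u _ => Finset.sum_congr rfl fun t _ => by ring
  rw [hfac]
  have hB : (∑ u : Fin n → Fin m, e2pi (((∑ i, ((u i : ℕ) : ℤ) * c i : ℤ) : ℝ) / m))
      = if ∀ i, (m : ℤ) ∣ c i then ((m : ℂ)) ^ n else 0 := by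
    have h1 : ∀ u : Fin n → Fin m,
        e2pi (((∑ i, ((u i : ℕ) : ℤ) * c i : ℤ) : ℝ) / m)
          = ∏ i, e2pi ((((u i : ℕ) * c i : ℤ) : ℝ) / m) := by
      intro u
      rw [← e2pi_sum]
      congr 1
      push_cast
      rw [Finset.sum_div]
    simp_rw [h1]
    rw [← Fintype.piFinset_univ]
    rw [show (∑ x ∈ Fintype.piFinset (fun _ : Fin n => (Finset.univ : Finset (Fin m))),
        ∏ i, e2pi ((((x i : ℕ) * c i : ℤ) : ℝ) / m))
        = ∏ i, ∑ y ∈ (Finset.univ : Finset (Fin m)), e2pi ((((y : ℕ) * c i : ℤ) : ℝ) / m) from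
      (Finset.prod_univ_sum (fun _ : Fin n => (Finset.univ : Finset (Fin m)))
        (fun i y => e2pi ((((y : ℕ) * c i : ℤ) : ℝ) / m))).symm]
    simp_rw [sum_e2pi_fin m hm]
    by_cases h : ∀ i, (m : ℤ) ∣ c i
    · rw [if_pos h, Finset.prod_congr rfl fun i _ => if_pos (h i)]
      simp
    · rw [if_neg h]
      push_neg at h
      obtain ⟨i, hi⟩ := h
      exact Finset.prod_eq_zero (Finset.mem_univ i) (if_neg hi)
  rw [hB]
  by_cases h : ∀ i, (m : ℤ) ∣ c i
  · rw [if_pos h, if_pos h, weylF]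
    have hA : ∀ t : Fin n → Fin q,
        e2pi (((a' * MvPolynomial.eval (fun i => ((t i : ℕ) : ℤ)) Q : ℤ) : ℝ) / q)
          * e2pi (((∑ i, ((t i : ℕ) : ℤ) * c i : ℤ) : ℝ) / ((m * q : ℕ) : ℝ))
        = e2pi (((a' * MvPolynomial.eval (fun i => ((t i : ℕ) : ℤ)) Q
            + ∑ i, ((t i : ℕ) : ℤ) * ((fun i => c i / m) i) : ℤ) : ℝ) / (q : ℝ)) := by
      intro t
      rw [← e2pi_add]
      congr 1
      have hs : (∑ i, ((t i : ℕ) : ℤ) * c i : ℤ)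
          = (m : ℤ) * ∑ i, ((t i : ℕ) : ℤ) * (c i / m) := by
        rw [Finset.mul_sum]
        refine Finset.sum_congr rfl fun i _ => ?_
        have h2 : (m : ℤ) * (c i / m) = c i := Int.mul_ediv_cancel' (h i)
        conv_lhs => rw [← h2]
        ring
      rw [hs]
      push_cast
      field_simp
    simp_rw [hA]
    have hmc : (m : ℂ) ≠ 0 := Nat.cast_ne_zero.mpr hm.ne'
    have hqc : (q : ℂ) ≠ 0 := Nat.cast_ne_zero.mpr hq.ne'
    rw [show ((m * q : ℕ) : ℂ) = (m : ℂ) * (q : ℂ) by push_cast; ring, mul_pow]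
    field_simp
  · rw [if_neg h, if_neg h]
    ring

def Wterm (n : ℕ) (Q : MvPolynomial (Fin n) ℤ) (lam : ℤ) (Φ : (Fin n → ℝ) → ℂ)
    (ξ : Fin n → ℝ) (d a : ℕ) : ℂ :=
  ∑ av : Fin n → Fin d,
    weylF n Q d (a : ℤ) (fun i => ((av i : ℕ) : ℤ)) *
      e2pi (-((lam : ℝ) * (a : ℝ) / (d : ℝ))) *
      Φ (ξ - fun i => ((av i : ℕ) : ℝ) / (d : ℝ))

lemma inner_eq (n : ℕ) (Q : MvPolynomial (Fin n) ℤ) (lam : ℤ) (Φ : (Fin n → ℝ) → ℂ)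
    (ξ : Fin n → ℝ) (m q : ℕ) (hm : 0 < m) (hq : 0 < q) (a' : ℕ) :
    Wterm n Q lam Φ ξ (m * q) (a' * m) = Wterm n Q lam Φ ξ q a' := by
  have hmr : (m : ℝ) ≠ 0 := Nat.cast_ne_zero.mpr hm.ne'
  have hqr : (q : ℝ) ≠ 0 := Nat.cast_ne_zero.mpr hq.ne'
  unfold Wterm
  have hW : ∀ av : Fin n → Fin (m * q),
      weylF n Q (m * q) ((a' * m : ℕ) : ℤ) (fun i => ((av i : ℕ) : ℤ))
        = if ∀ i, (m : ℤ) ∣ ((av i : ℕ) : ℤ)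
          then weylF n Q q (a' : ℤ) (fun i => ((av i : ℕ) : ℤ) / m) else 0 := by
    intro av
    rw [show ((a' * m : ℕ) : ℤ) = (a' : ℤ) * (m : ℕ) by push_cast; ring]
    exact weyl_key n Q m q hm hq _ _
  simp_rw [hW, ite_mul, zero_mul]
  rw [Finset.sum_ite, Finset.sum_const_zero, add_zero]
  refine Finset.sum_nbij' (fun av k => (⟨(av k : ℕ) / m, ?_⟩ : Fin q))
    (fun av' k => (⟨m * (av' k : ℕ), ?_⟩ : Fin (m * q))) ?_ ?_ ?_ ?_ ?_
  · exact (Nat.div_lt_iff_lt_mul hm).mpr (Nat.lt_of_lt_of_eq (av k).2 (mul_comm m q))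
  · exact (Nat.mul_lt_mul_left hm).mpr (av' k).2
  · intro a _; exact Finset.mem_univ _
  · intro av' _
    simp only [Finset.mem_filter, Finset.mem_univ, true_and]
    intro i
    exact Int.natCast_dvd_natCast.mpr ⟨(av' i : ℕ), rfl⟩
  · intro av hav
    simp only [Finset.mem_filter, Finset.mem_univ, true_and] at hav
    funext k
    ext
    exact Nat.mul_div_cancel' (Int.natCast_dvd_natCast.mp (hav k))
  · intro av' _
    funext k
    ext
    exact Nat.mul_div_cancel_left _ hm
  · intro av hav
    simp only [Finset.mem_filter, Finset.mem_univ, true_and] at hav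
    have e1 : (fun i => ((av i : ℕ) : ℤ) / (m : ℤ)) = (fun i => (((av i : ℕ) / m : ℕ) : ℤ)) := by
      funext i; exact (Int.natCast_ediv _ _).symm
    have e2 : -((lam : ℝ) * ((a' * m : ℕ) : ℝ) / ((m * q : ℕ) : ℝ))
        = -((lam : ℝ) * (a' : ℝ) / (q : ℝ)) := by
      push_cast; field_simp; try ring
    have e3 : (ξ - fun i => ((av i : ℕ) : ℝ) / ((m * q : ℕ) : ℝ))
        = (ξ - fun i => (((av i : ℕ) / m : ℕ) : ℝ) / (q : ℝ)) := by
      funext k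
      simp only [Pi.sub_apply]
      obtain ⟨b, hb⟩ := Int.natCast_dvd_natCast.mp (hav k)
      congr 1
      rw [hb, Nat.mul_div_cancel_left _ hm]
      push_cast; field_simp
    rw [e1, e2, e3]

lemma lemA (n : ℕ) (Q : MvPolynomial (Fin n) ℤ) (lam : ℤ) (Φ : (Fin n → ℝ) → ℂ)
    (ξ : Fin n → ℝ) (d : ℕ) (hd : d ≠ 0) :
    ∑ a ∈ Finset.range d, Wterm n Q lam Φ ξ d a =
      ∑ q ∈ d.divisors, ∑ a ∈ (Finset.range q).filter (fun a => Nat.gcd a q = 1),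
        Wterm n Q lam Φ ξ q a := by
  rw [← Finset.sum_fiberwise_of_maps_to (g := fun a => d / Nat.gcd a d)
    (t := d.divisors) (fun a _ => Nat.mem_divisors.mpr ⟨Nat.div_dvd_of_dvd (Nat.gcd_dvd_right a d), hd⟩)]
  refine Finset.sum_congr rfl fun q hq => ?_
  obtain ⟨hqd, -⟩ := Nat.mem_divisors.mp hq
  have hq0 : 0 < q := Nat.pos_of_mem_divisors hq
  obtain ⟨m, rfl⟩ : ∃ m, d = m * q := ⟨d / q, by rw [Nat.div_mul_cancel hqd]⟩
  have hm0 : 0 < m := Nat.pos_of_ne_zero (fun h => hd (by simp [h]))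
  have hgcd : ∀ a ∈ (Finset.range (m * q)).filter (fun a => m * q / Nat.gcd a (m * q) = q),
      Nat.gcd a (m * q) = m := by
    intro a ha
    obtain ⟨-, ha2⟩ := Finset.mem_filter.mp ha
    have hgd : Nat.gcd a (m * q) ∣ m * q := Nat.gcd_dvd_right _ _
    have h1 : m * q = Nat.gcd a (m * q) * q := Nat.eq_mul_of_div_eq_right hgd ha2
    exact (Nat.eq_of_mul_eq_mul_right hq0 h1.symm)
  refine Finset.sum_nbij' (fun a => a / m) (fun a' => a' * m) ?_ ?_ ?_ ?_ ?_
  · intro a ha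
    have hg := hgcd a ha
    obtain ⟨ha1, -⟩ := Finset.mem_filter.mp ha
    rw [Finset.mem_range] at ha1
    refine Finset.mem_filter.mpr ⟨Finset.mem_range.mpr ?_, ?_⟩
    · exact (Nat.div_lt_iff_lt_mul hm0).mpr (Nat.lt_of_lt_of_eq ha1 (mul_comm m q))
    · have hpos : 0 < Nat.gcd a (m * q) := by rw [hg]; exact hm0
      have := Nat.coprime_div_gcd_div_gcd hpos
      rw [hg, Nat.mul_div_cancel_left _ hm0] at this
      exact this
  · intro a' ha'
    obtain ⟨ha1, ha2⟩ := Finset.mem_filter.mp ha'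
    rw [Finset.mem_range] at ha1
    have hg : Nat.gcd (a' * m) (m * q) = m := by
      rw [mul_comm m q, Nat.gcd_mul_right, ha2, one_mul]
    refine Finset.mem_filter.mpr ⟨Finset.mem_range.mpr ?_, ?_⟩
    · exact Nat.lt_of_lt_of_eq ((Nat.mul_lt_mul_right hm0).mpr ha1) (mul_comm q m)
    · rw [hg, Nat.mul_div_cancel_left _ hm0]
  · intro a ha
    exact Nat.div_mul_cancel (by rw [← hgcd a ha]; exact Nat.gcd_dvd_left a (m * q))
  · intro a' _
    exact Nat.mul_div_cancel _ hm0
  · intro a ha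
    conv_lhs => rw [show a = (a / m) * m from
      (Nat.div_mul_cancel (by rw [← hgcd a ha]; exact Nat.gcd_dvd_left a (m * q))).symm]
    exact inner_eq n Q lam Φ ξ m q hm0 hq0 (a / m)

variable (n : ℕ) (Q : MvPolynomial (Fin n) ℤ) (lam : ℤ) (Φ : (Fin n → ℝ) → ℂ) (ξ : Fin n → ℝ)

def Sfun : ArithmeticFunction ℂ :=
  ⟨fun q => ∑ a ∈ (Finset.range q).filter (fun a => Nat.gcd a q = 1), Wterm n Q lam Φ ξ q a,
    by simp⟩
def Tfun : ArithmeticFunction ℂ :=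
  ⟨fun d => ∑ a ∈ Finset.range d, Wterm n Q lam Φ ξ d a, by simp⟩

lemma TS : (↑(ζ : ArithmeticFunction ℕ) : ArithmeticFunction ℂ) * Sfun n Q lam Φ ξ = Tfun n Q lam Φ ξ := by
  ext d
  rcases eq_or_ne d 0 with rfl | hd
  · simp
  · rw [ArithmeticFunction.coe_zeta_mul_apply]
    exact (lemA n Q lam Φ ξ d hd).symm

lemma STa : ((μ : ArithmeticFunction ℤ) : ArithmeticFunction ℂ) * Tfun n Q lam Φ ξ = Sfun n Q lam Φ ξ := by
  rw [← TS, ← mul_assoc]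
  rw [ArithmeticFunction.coe_moebius_mul_coe_zeta, one_mul]

lemma mobius_step (j : ℕ) (hj : 1 ≤ j) :
    ∑ q ∈ Finset.Ico (2 ^ (j - 1)) (2 ^ j), Sfun n Q lam Φ ξ q
      = ∑ d ∈ Finset.Icc 1 (2 ^ j), (Cjd j d : ℂ) * Tfun n Q lam Φ ξ d := by
  have hC : ∀ d : ℕ, ((Cjd j d : ℤ) : ℂ) * Tfun n Q lam Φ ξ d
      = ∑ h ∈ Finset.Icc 1 (2 ^ j),
          if 2 ^ (j - 1) ≤ d * h ∧ d * h < 2 ^ j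
            then ((moebius h : ℤ) : ℂ) * Tfun n Q lam Φ ξ d else 0 := by
    intro d
    rw [Cjd]
    push_cast
    rw [Finset.sum_mul]
    refine Finset.sum_congr rfl fun h _ => ?_
    rw [ite_mul, zero_mul]
  simp_rw [hC]
  rw [← Finset.sum_product']
  rw [← Finset.sum_filter]
  have hbij : ∑ x ∈ (Finset.Icc 1 (2 ^ j) ×ˢ Finset.Icc 1 (2 ^ j)).filter
        (fun x : ℕ × ℕ => 2 ^ (j - 1) ≤ x.1 * x.2 ∧ x.1 * x.2 < 2 ^ j),
        ((moebius x.2 : ℤ) : ℂ) * Tfun n Q lam Φ ξ x.1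
      = ∑ N ∈ Finset.Ico (2 ^ (j - 1)) (2 ^ j),
          ∑ x ∈ N.divisorsAntidiagonal, ((moebius x.2 : ℤ) : ℂ) * Tfun n Q lam Φ ξ x.1 := by
    rw [Finset.sum_sigma']
    refine Finset.sum_nbij' (fun x => ⟨x.1 * x.2, x⟩) (fun y => y.2) ?_ ?_ ?_ ?_ ?_
    · rintro ⟨d, h⟩ hx
      obtain ⟨hmem, hcond⟩ := Finset.mem_filter.mp hx
      refine Finset.mem_sigma.mpr ⟨Finset.mem_Ico.mpr ⟨hcond.1, hcond.2⟩, ?_⟩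
      refine Nat.mem_divisorsAntidiagonal.mpr ⟨rfl, ?_⟩
      have : 0 < 2 ^ (j - 1) := Nat.pow_pos (by norm_num)
      dsimp only at hcond ⊢
      omega
    · rintro ⟨N, d, h⟩ hy
      obtain ⟨hN, hdh⟩ := Finset.mem_sigma.mp hy
      obtain ⟨hprod, hN0⟩ := Nat.mem_divisorsAntidiagonal.mp hdh
      rw [Finset.mem_Ico] at hN
      dsimp only at hprod hN0 hN ⊢
      have hd0 : d ≠ 0 := by rintro rfl; rw [← hprod] at hN0; simp at hN0
      have hh0 : h ≠ 0 := by rintro rfl; rw [← hprod] at hN0; simp at hN0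
      have hdN : d ≤ N := by rw [← hprod]; exact Nat.le_mul_of_pos_right d (Nat.pos_of_ne_zero hh0)
      have hhN : h ≤ N := by rw [← hprod]; exact Nat.le_mul_of_pos_left h (Nat.pos_of_ne_zero hd0)
      refine Finset.mem_filter.mpr ⟨Finset.mem_product.mpr
        ⟨Finset.mem_Icc.mpr ⟨Nat.one_le_iff_ne_zero.mpr hd0, le_trans hdN (le_of_lt hN.2)⟩,
         Finset.mem_Icc.mpr ⟨Nat.one_le_iff_ne_zero.mpr hh0, le_trans hhN (le_of_lt hN.2)⟩⟩, ?_⟩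
      rw [hprod]
      exact ⟨hN.1, hN.2⟩
    · rintro ⟨d, h⟩ hx; rfl
    · rintro ⟨N, d, h⟩ hy
      obtain ⟨hN, hdh⟩ := Finset.mem_sigma.mp hy
      obtain ⟨hprod, hN0⟩ := Nat.mem_divisorsAntidiagonal.mp hdh
      simp [hprod]
    · rintro ⟨d, h⟩ hx; rfl
  rw [hbij]
  have hmul : ∀ N : ℕ, (∑ x ∈ N.divisorsAntidiagonal, ((moebius x.2 : ℤ) : ℂ) * Tfun n Q lam Φ ξ x.1)
      = Sfun n Q lam Φ ξ N := by
    intro N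
    have h1 : ∑ x ∈ N.divisorsAntidiagonal, ((moebius x.2 : ℤ) : ℂ) * Tfun n Q lam Φ ξ x.1
        = ∑ x ∈ N.divisorsAntidiagonal,
            (((μ : ArithmeticFunction ℤ) : ArithmeticFunction ℂ)) x.1 * Tfun n Q lam Φ ξ x.2 := by
      refine Finset.sum_nbij' Prod.swap Prod.swap ?_ ?_ ?_ ?_ ?_
      · intro x hx
        exact Nat.swap_mem_divisorsAntidiagonal.mpr hx
      · intro x hx
        exact Nat.swap_mem_divisorsAntidiagonal.mpr hx
      · intro x _; exact Prod.swap_swap x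
      · intro x _; exact Prod.swap_swap x
      · intro x _
        simp [ArithmeticFunction.intCoe_apply]
    rw [h1, ← ArithmeticFunction.mul_apply, STa]
  simp_rw [hmul]


theorem stmt8 (n : ℕ) (hn : 1 ≤ n) (Q : MvPolynomial (Fin n) ℤ)
    (lam : ℤ) (j : ℕ) (hj : 1 ≤ j)
    (Φ : (Fin n → ℝ) → ℂ) (ξ : Fin n → ℝ) :
    ∑ q ∈ Finset.Ico (2 ^ (j - 1)) (2 ^ j),
      ∑ a ∈ (Finset.range q).filter (fun a => Nat.gcd a q = 1),
        ∑ av : Fin n → Fin q,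
          weylF n Q q (a : ℤ) (fun i => ((av i : ℕ) : ℤ)) *
            e2pi (-((lam : ℝ) * (a : ℝ) / (q : ℝ))) *
            Φ (ξ - fun i => ((av i : ℕ) : ℝ) / (q : ℝ)) =
    ∑ d ∈ Finset.Icc 1 (2 ^ j), (Cjd j d : ℂ) *
      ∑ a ∈ Finset.range d, ∑ av : Fin n → Fin d,
        weylF n Q d (a : ℤ) (fun i => ((av i : ℕ) : ℤ)) *
          e2pi (-((lam : ℝ) * (a : ℝ) / (d : ℝ))) *
          Φ (ξ - fun i => ((av i : ℕ) : ℝ) / (d : ℝ)) := by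
  have h := mobius_step n Q lam Φ ξ j hj
  have hL : ∑ q ∈ Finset.Ico (2 ^ (j - 1)) (2 ^ j), Sfun n Q lam Φ ξ q
      = ∑ q ∈ Finset.Ico (2 ^ (j - 1)) (2 ^ j),
          ∑ a ∈ (Finset.range q).filter (fun a => Nat.gcd a q = 1),
            ∑ av : Fin n → Fin q,
              weylF n Q q (a : ℤ) (fun i => ((av i : ℕ) : ℤ)) *
                e2pi (-((lam : ℝ) * (a : ℝ) / (q : ℝ))) *
                Φ (ξ - fun i => ((av i : ℕ) : ℝ) / (q : ℝ)) := rfl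
  have hR : ∑ d ∈ Finset.Icc 1 (2 ^ j), (Cjd j d : ℂ) * Tfun n Q lam Φ ξ d
      = ∑ d ∈ Finset.Icc 1 (2 ^ j), (Cjd j d : ℂ) *
          ∑ a ∈ Finset.range d, ∑ av : Fin n → Fin d,
            weylF n Q d (a : ℤ) (fun i => ((av i : ℕ) : ℤ)) *
              e2pi (-((lam : ℝ) * (a : ℝ) / (d : ℝ))) *
              Φ (ξ - fun i => ((av i : ℕ) : ℝ) / (d : ℝ)) := rfl
  rw [← hL, ← hR]
  exact h
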